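/- Let p be an odd prime, n ≥ 1, and k ≥ 2 an integer with 2k dividing p^n − 1. Then the elementary abelian group G = (ℤ/p)^n admits an automorphism σ of order a power of k such that both σ and σ² are fixed-point-free on G \ {0}. -/

import Mathlib

/-- For an odd prime `p`, `n ≥ 1`, and `k ≥ 2` with `2k ∣ p^n − 1`, the
elementary abelian group `(ℤ/p)^n` has an automorphism `σ` of order a power of `k` such
that both `σ` and `σ²` are fixed-point-free. -/
theorem stmt9 (p n k : ℕ) (hp : p.Prime) (hodd : Odd p) (hn : 1 ≤ n) (hk : 2 ≤ k)
    (hdvd : 2 * k ∣ p ^ n - 1) :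
    ∃ σ : AddAut (Fin n → ZMod p),
      (∃ e : ℕ, addOrderOf σ = k ^ e) ∧
      (∀ v : Fin n → ZMod p, σ v = v → v = 0) ∧
      (∀ v : Fin n → ZMod p, σ (σ v) = v → v = 0) := by
  haveI : Fact p.Prime := ⟨hp⟩
  have hn0 : n ≠ 0 := by omega
  set F := GaloisField p n with hF
  haveI : Fintype F := Fintype.ofFinite F
  haveI : Fintype Fˣ := Fintype.ofFinite Fˣ
  haveI : DecidableEq F := Classical.decEq F
  have hcard : Fintype.card F = p ^ n := by
    rw [← Nat.card_eq_fintype_card]; exact GaloisField.card p n hn0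
  have hcardu : Nat.card Fˣ = p ^ n - 1 := by
    rw [Nat.card_units, Nat.card_eq_fintype_card, hcard]
  -- choose d = k^e with d ∣ p^n - 1 and d > 2
  obtain ⟨d, e, hd_dvd, hde, hd2⟩ : ∃ d e : ℕ, d ∣ p ^ n - 1 ∧ d = k ^ e ∧ 2 < d := by
    rcases eq_or_lt_of_le hk with h2 | h3
    · refine ⟨4, 2, ?_, by rw [← h2]; norm_num, by norm_num⟩
      have : 2 * k = 4 := by omega
      rwa [this] at hdvd
    · exact ⟨k, 1, dvd_trans ⟨2, by ring⟩ hdvd, (pow_one k).symm, h3⟩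
  have hdpos : 0 < d := by omega
  -- unit of order d
  obtain ⟨g, hg⟩ := IsCyclic.exists_generator (α := Fˣ)
  have hog : orderOf g = p ^ n - 1 := by
    rw [orderOf_eq_card_of_forall_mem_zpowers hg, hcardu]
  set u : Fˣ := g ^ ((p ^ n - 1) / d) with hu_def
  have hu : orderOf u = d := by
    rw [hu_def, orderOf_pow, hog, Nat.gcd_eq_right (Nat.div_dvd_of_dvd hd_dvd),
      Nat.div_div_self hd_dvd (by
        have := hp.one_lt
        have : 1 < p ^ n := Nat.one_lt_pow hn0 hp.one_lt
        omega)]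
  have hune : (u : F) ≠ 1 := by
    intro h
    have : u = 1 := Units.ext h
    rw [this, orderOf_one] at hu; omega
  have hu2ne : (u : F) * (u : F) ≠ 1 := by
    intro h
    have h2 : u ^ 2 = 1 := by ext; push_cast [pow_two]; exact h
    have := orderOf_dvd_of_pow_eq_one h2
    rw [hu] at this
    have := Nat.le_of_dvd (by norm_num) this; omega
  -- σ₀ : AddAut F, mult by u
  set σ₀ : AddAut F := (DistribMulAction.toAddAut Fˣ F u).toAdd with hσ₀_def
  have hσ₀_apply : ∀ w : F, σ₀ w = (u : F) * w := fun w => rfl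
  have hinj : Function.Injective (DistribMulAction.toAddAut Fˣ F) := by
    intro a b hab
    have h : (a : F) * 1 = (b : F) * 1 := DFunLike.congr_fun (congrArg Multiplicative.toAdd hab) (1 : F)
    exact Units.ext (by simpa [Units.smul_def] using h)
  have hσ₀_ord : addOrderOf σ₀ = d := by
    rw [hσ₀_def, ← orderOf_ofAdd_eq_addOrderOf, ofAdd_toAdd, orderOf_injective _ hinj, hu]
  -- linear equiv
  have h1 : Module.finrank (ZMod p) (Fin n → ZMod p) = n := Module.finrank_fin_fun _
  have h2 : Module.finrank (ZMod p) F = n := GaloisField.finrank p hn0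
  let L : F ≃ₗ[ZMod p] (Fin n → ZMod p) := LinearEquiv.ofFinrankEq _ _ (h2.trans h1.symm)
  let E : F ≃+ (Fin n → ZMod p) := L.toAddEquiv
  refine ⟨AddAut.congr E σ₀, ⟨e, ?_⟩, ?_, ?_⟩
  · have ho := addOrderOf_injective (AddAut.congr E).toAddMonoidHom (AddAut.congr E).injective σ₀
    rw [show (AddAut.congr E).toAddMonoidHom σ₀ = AddAut.congr E σ₀ from rfl] at ho
    rw [ho, hσ₀_ord, hde]
  · intro v hv
    have hv' : σ₀ (E.symm v) = E.symm v := by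
      have : E (σ₀ (E.symm v)) = v := hv
      have := congrArg E.symm this
      simpa using this
    rw [hσ₀_apply] at hv'
    have : ((u : F) - 1) * E.symm v = 0 := by rw [sub_mul, one_mul, hv', sub_self]
    rcases mul_eq_zero.mp this with h | h
    · exact absurd (by linear_combination h) hune
    · have : E.symm v = 0 := h
      have := congrArg E this
      simpa using this
  · intro v hv
    have hv' : σ₀ (σ₀ (E.symm v)) = E.symm v := by
      have : E (σ₀ (E.symm (E (σ₀ (E.symm v))))) = v := hv
      rw [AddEquiv.symm_apply_apply] at this
      have := congrArg E.symm this
      simpa using this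
    rw [hσ₀_apply, hσ₀_apply] at hv'
    have : ((u : F) * (u : F) - 1) * E.symm v = 0 := by
      rw [sub_mul, one_mul, mul_assoc, hv', sub_self]
    rcases mul_eq_zero.mp this with h | h
    · exact absurd (by linear_combination h) hu2ne
    · have : E.symm v = 0 := h
      have := congrArg E this
      simpa using this
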